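/- Let C and C' be faces of a finite arrangement 𝓗 of linear hyperplanes through the origin in a finite-dimensional real vector space V. Then C' ⊆ closure(C) if and only if for every H ∈ 𝓗 either v_H(C') = 0 or v_H(C') = v_H(C). Consequently the closure order on faces coincides with the componentwise sign order in which 0 ≤ +1 and 0 ≤ −1. -/

import Mathlib

noncomputable section

variable {V : Type*} [NormedAddCommGroup V] [NormedSpace ℝ V] {ι : Type*}

/-- The sign vector of a point with respect to a family of defining linear forms. -/
def sgnVec (f : ι → V →ₗ[ℝ] ℝ) (x : V) : ι → SignType := fun i => SignType.sign (f i x)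

/-- The face (cell) of the arrangement containing the point `x`:
the level set of the sign-vector map through `x`. -/
def faceOf (f : ι → V →ₗ[ℝ] ℝ) (x : V) : Set V := {y | sgnVec f y = sgnVec f x}

/-- The type of faces (cells) of the arrangement with defining forms `f`. -/
def Face (f : ι → V →ₗ[ℝ] ℝ) : Type _ := {C : Set V // ∃ x : V, C = faceOf f x}

/-- The closure order on faces: `C' ≤ C` iff `C' ⊆ closure C`. -/
def FaceLE {f : ι → V →ₗ[ℝ] ℝ} (C' C : Face f) : Prop := C'.1 ⊆ closure C.1

lemma FaceLE.refl {f : ι → V →ₗ[ℝ] ℝ} (C : Face f) : FaceLE C C := subset_closure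

lemma FaceLE.trans' {f : ι → V →ₗ[ℝ] ℝ} {C'' C' C : Face f}
    (h1 : FaceLE C'' C') (h2 : FaceLE C' C) : FaceLE C'' C :=
  h1.trans (closure_minimal h2 isClosed_closure)

/-- The face of the origin. -/
def faceO (f : ι → V →ₗ[ℝ] ℝ) : Face f := ⟨faceOf f 0, 0, rfl⟩

/-- The face of the origin is below every face in the closure order. -/
lemma faceO_le {f : ι → V →ₗ[ℝ] ℝ} (C : Face f) : FaceLE (faceO f) C := by
  obtain ⟨S, x, rfl⟩ := C
  intro y hy
  have hy0 : ∀ i, f i y = 0 := by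
    intro i
    have : SignType.sign (f i y) = SignType.sign (f i (0 : V)) := congrFun hy i
    simpa using this
  have hten : Filter.Tendsto (fun t : ℝ => y + t • x) (nhdsWithin 0 (Set.Ioi 0)) (nhds y) := by
    have h : Filter.Tendsto (fun t : ℝ => y + t • x) (nhds 0) (nhds (y + (0:ℝ) • x)) :=
      tendsto_const_nhds.add ((continuous_id.smul continuous_const).tendsto 0)
    simpa using h.mono_left nhdsWithin_le_nhds
  refine mem_closure_of_tendsto hten ?_
  filter_upwards [self_mem_nhdsWithin] with t ht
  show y + t • x ∈ faceOf f x
  funext i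
  simp only [sgnVec, map_add, map_smul, hy0 i, zero_add, smul_eq_mul]
  rw [sign_mul, sign_pos ht, one_mul]

universe u

/-- A double representation of the face poset of an arrangement. -/
structure DoubleRep (f : ι → V →ₗ[ℝ] ℝ) where
  E : Face f → ModuleCat.{u} ℂ
  finDim : ∀ C, FiniteDimensional ℂ (E C)
  γ : ∀ C' C : Face f, FaceLE C' C → (E C' →ₗ[ℂ] E C)
  δ : ∀ C' C : Face f, FaceLE C' C → (E C →ₗ[ℂ] E C')
  γ_id : ∀ (C : Face f) (h : FaceLE C C), γ C C h = LinearMap.id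
  δ_id : ∀ (C : Face f) (h : FaceLE C C), δ C C h = LinearMap.id
  γ_comp : ∀ (C'' C' C : Face f) (h1 : FaceLE C'' C') (h2 : FaceLE C' C),
    γ C'' C (h1.trans' h2) = (γ C' C h2).comp (γ C'' C' h1)
  δ_comp : ∀ (C'' C' C : Face f) (h1 : FaceLE C'' C') (h2 : FaceLE C' C),
    δ C'' C (h1.trans' h2) = (δ C'' C' h1).comp (δ C' C h2)

/-- The map `φ_{AB} = γ_{OB} ∘ δ_{AO}` of a double representation. -/
def phiMap {f : ι → V →ₗ[ℝ] ℝ} (ψ : DoubleRep f) (A B : Face f) : ψ.E A →ₗ[ℂ] ψ.E B :=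
  (ψ.γ (faceO f) B (faceO_le B)).comp (ψ.δ (faceO f) A (faceO_le A))

/-- Monotonicity: `γ_{C'C} ∘ δ_{CC'} = id`. -/
def Monotonicity {f : ι → V →ₗ[ℝ] ℝ} (ψ : DoubleRep f) : Prop :=
  ∀ (C' C : Face f) (h : FaceLE C' C), (ψ.γ C' C h).comp (ψ.δ C' C h) = LinearMap.id

/-- A collinear triple of faces. -/
def Collin3 {f : ι → V →ₗ[ℝ] ℝ} (A B C : Face f) : Prop :=
  ∃ a ∈ A.1, ∃ b ∈ B.1, ∃ c ∈ C.1, b ∈ segment ℝ a c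

/-- Transitivity: `φ_{AC} = φ_{BC} ∘ φ_{AB}` for collinear triples. -/
def Transitivity {f : ι → V →ₗ[ℝ] ℝ} (ψ : DoubleRep f) : Prop :=
  ∀ A B C : Face f, Collin3 A B C → phiMap ψ A C = (phiMap ψ B C).comp (phiMap ψ A B)

/-- Two faces of equal dimension and equal span are opposed by a face `D` of one lower
dimension. -/
def Opposed (f : ι → V →ₗ[ℝ] ℝ) (C1 C2 D : Face f) : Prop :=
  C1 ≠ C2 ∧ Submodule.span ℝ C1.1 = Submodule.span ℝ C2.1 ∧
  FaceLE D C1 ∧ FaceLE D C2 ∧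
  Module.finrank ℝ (Submodule.span ℝ D.1) + 1 = Module.finrank ℝ (Submodule.span ℝ C1.1) ∧
  ∀ i, (∀ d ∈ D.1, f i d = 0) → ∀ y ∈ C1.1, ∀ z ∈ C2.1,
    SignType.sign (f i y) = - SignType.sign (f i z) ∧ SignType.sign (f i y) ≠ 0

/-- Invertibility: `φ_{C₁C₂}` is an isomorphism whenever `C₁, C₂` are opposed by a face. -/
def Invertibility {f : ι → V →ₗ[ℝ] ℝ} (ψ : DoubleRep f) : Prop :=
  ∀ C1 C2 D : Face f, Opposed f C1 C2 D → Function.Bijective (phiMap ψ C1 C2)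

/-- Membership in the category `𝓙_𝓗`. -/
def InJ {f : ι → V →ₗ[ℝ] ℝ} (ψ : DoubleRep f) : Prop :=
  Monotonicity ψ ∧ Transitivity ψ ∧ Invertibility ψ

/-- A chamber: a face on which no defining form vanishes. -/
def IsChamber (f : ι → V →ₗ[ℝ] ℝ) (C : Face f) : Prop := ∀ i, ∀ y ∈ C.1, f i y ≠ 0

/-- A codimension-one face: exactly one defining form vanishes on it. -/
def IsCodimOne (f : ι → V →ₗ[ℝ] ℝ) (D : Face f) : Prop := ∃! i, ∀ y ∈ D.1, f i y = 0

/-- A subrepresentation of a double representation. -/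
def IsSubrep {f : ι → V →ₗ[ℝ] ℝ} (ψ : DoubleRep f) (F : ∀ C, Submodule ℂ (ψ.E C)) : Prop :=
  ∀ (C' C : Face f) (h : FaceLE C' C),
    (∀ v ∈ F C', ψ.γ C' C h v ∈ F C) ∧ (∀ v ∈ F C, ψ.δ C' C h v ∈ F C')

/-- Simplicity of a double representation. -/
def IsSimpleRep {f : ι → V →ₗ[ℝ] ℝ} (ψ : DoubleRep f) : Prop :=
  (∃ (C : Face f) (v : ψ.E C), v ≠ 0) ∧
  ∀ F, IsSubrep ψ F → (∀ C, F C = ⊥) ∨ (∀ C, F C = ⊤)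


/-- For faces `C, C'` of a finite arrangement of linear hyperplanes through
the origin in a finite-dimensional real vector space, `C' ⊆ closure C` iff for every
hyperplane the sign of `C'` is `0` or equals the sign of `C`; i.e. the closure order on
faces coincides with the componentwise sign order in which `0 ≤ +1` and `0 ≤ -1`. -/
theorem statement0 {V : Type*} [NormedAddCommGroup V] [NormedSpace ℝ V]
    [FiniteDimensional ℝ V] {ι : Type*} [Finite ι]
    (f : ι → V →ₗ[ℝ] ℝ) (hf : ∀ i, f i ≠ 0)
    (hker : ∀ p q : ι, LinearMap.ker (f p) = LinearMap.ker (f q) → p = q)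
    (C C' : Face f) (x x' : V) (hx : C.1 = faceOf f x) (hx' : C'.1 = faceOf f x') :
    FaceLE C' C ↔
      ∀ i, SignType.sign (f i x') = 0 ∨ SignType.sign (f i x') = SignType.sign (f i x) := by
  constructor
  · intro h i
    have hx'mem : x' ∈ C'.1 := by rw [hx']; exact rfl
    have hcl : x' ∈ closure (faceOf f x) := by rw [← hx]; exact h hx'mem
    have hcont : Continuous (f i) := (f i).continuous_of_finiteDimensional
    rcases lt_trichotomy (f i x) 0 with hneg | hzero | hpos
    · have hle : faceOf f x ⊆ {y | f i y ≤ 0} := by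
        intro y hy
        have hs : SignType.sign (f i y) = SignType.sign (f i x) := congrFun hy i
        rw [sign_neg hneg] at hs
        exact le_of_lt (sign_eq_neg_one_iff.mp hs)
      have hx'le : f i x' ≤ 0 :=
        closure_minimal hle (isClosed_le hcont continuous_const) hcl
      rcases eq_or_lt_of_le hx'le with he | hl
      · exact Or.inl (by rw [he]; exact sign_zero)
      · exact Or.inr (by rw [sign_neg hl, sign_neg hneg])
    · have hle : faceOf f x ⊆ {y | f i y = 0} := by
        intro y hy
        have hs : SignType.sign (f i y) = SignType.sign (f i x) := congrFun hy i
        rw [hzero, sign_zero] at hs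
        exact sign_eq_zero_iff.mp hs
      have hx'eq : f i x' = 0 :=
        closure_minimal hle (isClosed_eq hcont continuous_const) hcl
      exact Or.inl (by rw [hx'eq]; exact sign_zero)
    · have hle : faceOf f x ⊆ {y | 0 ≤ f i y} := by
        intro y hy
        have hs : SignType.sign (f i y) = SignType.sign (f i x) := congrFun hy i
        rw [sign_pos hpos] at hs
        exact le_of_lt (sign_eq_one_iff.mp hs)
      have hx'le : 0 ≤ f i x' :=
        closure_minimal hle (isClosed_le continuous_const hcont) hcl
      rcases eq_or_lt_of_le hx'le with he | hl
      · exact Or.inl (by rw [← he]; exact sign_zero)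
      · exact Or.inr (by rw [sign_pos hl, sign_pos hpos])
  · intro h y hy
    rw [hx'] at hy
    rw [hx]
    have hten : Filter.Tendsto (fun t : ℝ => y + t • x) (nhdsWithin 0 (Set.Ioi 0)) (nhds y) := by
      have h : Filter.Tendsto (fun t : ℝ => y + t • x) (nhds 0) (nhds (y + (0:ℝ) • x)) :=
        tendsto_const_nhds.add ((continuous_id.smul continuous_const).tendsto 0)
      simpa using h.mono_left nhdsWithin_le_nhds
    refine mem_closure_of_tendsto hten ?_
    filter_upwards [self_mem_nhdsWithin] with t ht
    show y + t • x ∈ faceOf f x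
    funext i
    have hsy : SignType.sign (f i y) = SignType.sign (f i x') := congrFun hy i
    show SignType.sign (f i (y + t • x)) = SignType.sign (f i x)
    rcases h i with h0 | heq
    · have hy0 : f i y = 0 := sign_eq_zero_iff.mp (hsy.trans h0)
      simp only [map_add, map_smul, hy0, zero_add, smul_eq_mul]
      rw [sign_mul, sign_pos ht, one_mul]
    · have hsame : SignType.sign (f i y) = SignType.sign (f i x) := hsy.trans heq
      rcases lt_trichotomy (f i x) 0 with hn | hz | hp
      · have hyn : f i y < 0 := sign_eq_neg_one_iff.mp (hsame.trans (sign_neg hn))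
        have hsum : f i y + t * f i x < 0 :=
          add_neg_of_neg_of_nonpos hyn (le_of_lt (mul_neg_of_pos_of_neg ht hn))
        simp only [map_add, map_smul, smul_eq_mul]
        rw [sign_neg hsum, sign_neg hn]
      · have hy0 : f i y = 0 := sign_eq_zero_iff.mp (by rw [hsame, hz, sign_zero])
        simp only [map_add, map_smul, hy0, zero_add, smul_eq_mul, hz, mul_zero]
      · have hyp : 0 < f i y := sign_eq_one_iff.mp (hsame.trans (sign_pos hp))
        have hsum : 0 < f i y + t * f i x := add_pos hyp (mul_pos ht hp)
        simp only [map_add, map_smul, smul_eq_mul]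
        rw [sign_pos hsum, sign_pos hp]

end
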